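/- Consider the scalar ODE z' = zⁿ with n ≥ 2 on the interval [0, ω] with ω > 0, as an equation for a complex-valued function z. The solutions satisfying z(0) = z(ω) are exactly the constant solutions z ≡ c where c = 0 or c^{n-1} = −1/((n-1)ω); in particular there are exactly n initial values c ∈ ℂ for which the solution z(t,c) is defined on [0, ω] and satisfies z(ω,c) = z(0,c). -/

import Mathlib

open Set Polynomial

lemma keyL (n : ℕ) (hn : 2 ≤ n) (ω : ℝ) (z : ℝ → ℂ)
    (hz : ∀ t ∈ Set.Icc (0:ℝ) ω, HasDerivAt z ((z t)^n) t)
    {a b : ℝ} (ha : a ∈ Set.Icc (0:ℝ) ω) (hb : b ∈ Set.Icc (0:ℝ) ω) (hab : a ≤ b)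
    (hne : ∀ t ∈ Set.Icc a b, z t ≠ 0) :
    ((z b)^(n-1))⁻¹ = ((z a)^(n-1))⁻¹ - ((n:ℂ)-1) * (b - a : ℝ) := by
  set m := n - 1 with hm
  have hm1 : 1 ≤ m := by omega
  have hsub : Set.Icc a b ⊆ Set.Icc 0 ω := Set.Icc_subset_Icc ha.1 hb.2
  set g : ℝ → ℂ := fun t => ((z t)^m)⁻¹ + (m:ℂ) * (t : ℝ) with hgdef
  have hg : ∀ t ∈ Set.Icc a b, HasDerivAt g 0 t := by
    intro t ht
    have h1 := hz t (hsub ht)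
    have hzt := hne t ht
    have h2 : HasDerivAt (fun s => (z s)^m) ((m:ℂ) * (z t)^(m-1) * (z t)^n) t := by
      have := (hasDerivAt_pow m (z t)).comp t h1
      simpa [Function.comp_def, mul_assoc] using this
    have h3 : HasDerivAt (fun s => ((z s)^m)⁻¹)
        (-(((z t)^m)^2)⁻¹ * ((m:ℂ) * (z t)^(m-1) * (z t)^n)) t := by
      have := (hasDerivAt_inv (pow_ne_zero m hzt)).comp t h2
      simpa [Function.comp_def] using this
    have h4 : HasDerivAt (fun s : ℝ => (m:ℂ) * (s:ℂ)) (m:ℂ) t := by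
      simpa using (Complex.ofRealCLM.hasDerivAt (x := t)).const_mul (m:ℂ)
    have h5 := h3.add h4
    refine h5.congr_deriv ?_
    have hpow : (z t)^(m-1) * (z t)^n = ((z t)^m)^2 := by
      rw [← pow_add, ← pow_mul]; congr 1; omega
    have hne2 : ((z t)^m)^2 ≠ 0 := pow_ne_zero 2 (pow_ne_zero m hzt)
    rw [mul_assoc (m:ℂ), hpow, neg_mul, mul_left_comm, inv_mul_cancel₀ hne2]; ring
  have hcont : ContinuousOn g (Set.Icc a b) :=
    fun t ht => ((hg t ht).continuousAt).continuousWithinAt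
  have hgb := constant_of_has_deriv_right_zero hcont
    (fun x hx => ((hg x (Set.Ico_subset_Icc_self hx)).hasDerivWithinAt)) b
    (Set.right_mem_Icc.2 hab)
  have hcast : ((n:ℂ) - 1) = (m:ℂ) := by
    have : ((m:ℕ):ℂ) = (n:ℂ) - 1 := by push_cast [hm, Nat.cast_sub (by omega : 1 ≤ n)]; ring
    rw [← this]
  rw [hcast]
  have : ((z b)^m)⁻¹ + (m:ℂ) * (b:ℝ) = ((z a)^m)⁻¹ + (m:ℂ) * (a:ℝ) := hgb
  push_cast at this ⊢
  linear_combination this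

lemma keyM (n : ℕ) (hn : 2 ≤ n) (ω : ℝ) (z : ℝ → ℂ)
    (hz : ∀ t ∈ Set.Icc (0:ℝ) ω, HasDerivAt z ((z t)^n) t)
    {t₂ : ℝ} (ht₂ : t₂ ∈ Set.Icc (0:ℝ) ω) (h0 : z t₂ ≠ 0) :
    ∀ t ∈ Set.Icc t₂ ω, z t ≠ 0 := by
  set m := n - 1 with hm
  have hm1 : 1 ≤ m := by omega
  by_contra hcon
  push_neg at hcon
  obtain ⟨t, ht, hzt⟩ := hcon
  have hsub : Set.Icc t₂ ω ⊆ Set.Icc 0 ω := Set.Icc_subset_Icc ht₂.1 le_rfl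
  have hcontOn : ContinuousOn z (Set.Icc t₂ ω) :=
    fun u hu => ((hz u (hsub hu)).continuousAt).continuousWithinAt
  set S := Set.Icc t₂ ω ∩ z ⁻¹' {0} with hS
  have hSne : S.Nonempty := ⟨t, ht, hzt⟩
  have hSbdd : BddBelow S := ⟨t₂, fun x hx => hx.1.1⟩
  have hSclosed : IsClosed S :=
    hcontOn.preimage_isClosed_of_isClosed isClosed_Icc isClosed_singleton
  set s := sInf S with hs
  have hsS : s ∈ S := hSclosed.csInf_mem hSne hSbdd
  have hzs : z s = 0 := hsS.2
  have hsIcc : s ∈ Set.Icc t₂ ω := hsS.1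
  have ht₂s : t₂ < s := lt_of_le_of_ne hsIcc.1 (fun h => h0 (h ▸ hzs))
  have hlt : ∀ b ∈ Set.Ico t₂ s, z b ≠ 0 := by
    intro b hb hzb
    exact absurd (csInf_le hSbdd ⟨⟨hb.1, le_trans hb.2.le hsIcc.2⟩, hzb⟩) (not_le.2 hb.2)
  set M : ℝ := ‖((z t₂)^m)⁻¹‖ + m * (s - t₂) with hM
  have hMpos : 0 < M := by
    have h1 : (0:ℝ) < m * (s - t₂) :=
      mul_pos (by exact_mod_cast hm1.trans_lt' (by norm_num) |>.le.lt_of_ne' (by exact_mod_cast (by omega : m ≠ 0))) (sub_pos.2 ht₂s)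
    exact add_pos_of_nonneg_of_pos (norm_nonneg _) h1
  have hbound : ∀ b ∈ Set.Ico t₂ s, (M)⁻¹ ≤ ‖(z b)^m‖ := by
    intro b hb
    have hne : ∀ u ∈ Set.Icc t₂ b, z u ≠ 0 :=
      fun u hu => hlt u ⟨hu.1, lt_of_le_of_lt hu.2 hb.2⟩
    have hbIcc : b ∈ Set.Icc (0:ℝ) ω :=
      ⟨le_trans ht₂.1 hb.1, le_trans hb.2.le hsIcc.2⟩
    have heq := keyL n hn ω z hz ht₂ hbIcc hb.1 hne
    have hinv : ‖((z b)^m)⁻¹‖ ≤ M := by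
      rw [heq]
      calc ‖((z t₂)^(n-1))⁻¹ - ((n:ℂ)-1) * ((b - t₂ : ℝ):ℂ)‖
          ≤ ‖((z t₂)^(n-1))⁻¹‖ + ‖((n:ℂ)-1) * ((b - t₂ : ℝ):ℂ)‖ := norm_sub_le _ _
        _ ≤ M := by
            rw [hM]
            gcongr
            have hc : ((n:ℂ)-1) = ((m:ℕ):ℂ) := by
              push_cast [hm, Nat.cast_sub (by omega : 1 ≤ n)]; ring
            rw [hc, norm_mul, Complex.norm_natCast, Complex.norm_real,
              Real.norm_eq_abs, abs_of_nonneg (by linarith [hb.1])]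
            gcongr
            · linarith [hb.2.le]
    have hzb : (z b)^m ≠ 0 := pow_ne_zero m (hlt b hb)
    have h1 : ‖(z b)^m‖ = ‖((z b)^m)⁻¹‖⁻¹ := by
      rw [norm_inv, inv_inv]
    rw [h1]
    exact inv_anti₀ (norm_pos_iff.2 (inv_ne_zero hzb)) hinv
  -- continuity contradiction
  have hca : ContinuousAt z s := (hz s (hsub hsIcc)).continuousAt
  have htend : Filter.Tendsto (fun b => ‖(z b)^m‖) (nhdsWithin s (Set.Iio s)) (nhds 0) := by
    have : Filter.Tendsto z (nhdsWithin s (Set.Iio s)) (nhds (z s)) :=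
      hca.continuousWithinAt.tendsto
    have := ((this.pow m).norm)
    rw [hzs, zero_pow (by omega : m ≠ 0), norm_zero] at this
    exact this
  have hev1 : ∀ᶠ b in nhdsWithin s (Set.Iio s), ‖(z b)^m‖ < M⁻¹ :=
    htend.eventually_lt_const (by positivity)
  have hev2 : ∀ᶠ b in nhdsWithin s (Set.Iio s), b ∈ Set.Ioo t₂ s :=
    Filter.eventually_of_mem (Ioo_mem_nhdsLT_of_mem ⟨ht₂s, le_rfl⟩) (fun _ h => h)
  obtain ⟨b, hb1, hb2⟩ := (hev1.and hev2).exists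
  exact absurd (hbound b ⟨hb2.1.le, hb2.2⟩) (not_le.2 hb1)

theorem stmt_5 (n : ℕ) (hn : 2 ≤ n) (ω : ℝ) (hω : 0 < ω) :
    (∀ z : ℝ → ℂ,
      (∀ t ∈ Set.Icc (0 : ℝ) ω, HasDerivAt z ((z t) ^ n) t) →
      (z ω = z 0 ↔ ∃ c : ℂ, (c = 0 ∨ c ^ (n - 1) = -1 / (((n : ℂ) - 1) * ω)) ∧
        ∀ t ∈ Set.Icc (0 : ℝ) ω, z t = c)) ∧
    {c : ℂ | c = 0 ∨ c ^ (n - 1) = -1 / (((n : ℂ) - 1) * ω)}.ncard = n := by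
  have hm1 : 1 ≤ n - 1 := by omega
  have hcastm : ((n:ℂ) - 1) = ((n-1 : ℕ):ℂ) := by
    push_cast [Nat.cast_sub (by omega : 1 ≤ n)]; ring
  have hmne : ((n-1:ℕ):ℂ) ≠ 0 := by exact_mod_cast (by omega : n - 1 ≠ 0)
  have hωne : ((ω:ℝ):ℂ) ≠ 0 := by exact_mod_cast hω.ne'
  constructor
  · intro z hz
    constructor
    · intro h
      have hω0 : (0:ℝ) ∈ Set.Icc (0:ℝ) ω := ⟨le_rfl, hω.le⟩
      have hωmem : ω ∈ Set.Icc (0:ℝ) ω := ⟨hω.le, le_rfl⟩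
      have hz0 : z 0 = 0 := by
        by_contra h0
        have hne := keyM n hn ω z hz hω0 h0
        have heq := keyL n hn ω z hz hω0 hωmem hω.le
          (fun t ht => hne t ⟨ht.1, ht.2⟩)
        rw [h] at heq
        have : ((n:ℂ)-1) * ((ω - 0 : ℝ):ℂ) = 0 := by linear_combination heq
        rw [hcastm] at this
        rcases mul_eq_zero.1 this with h' | h'
        · exact hmne h'
        · exact hωne (by push_cast at h' ⊢; linarith [Complex.ofReal_eq_zero.1 (by simpa using h')])
      refine ⟨0, Or.inl rfl, ?_⟩
      intro t ht
      by_contra hne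
      have := keyM n hn ω z hz ht hne ω ⟨ht.2, le_rfl⟩
      exact this (h.trans hz0)
    · rintro ⟨c, -, hc⟩
      rw [hc ω ⟨hω.le, le_rfl⟩, hc 0 ⟨le_rfl, hω.le⟩]
  · -- cardinality
    set m := n - 1 with hmdef
    set a : ℂ := -1 / (((n : ℂ) - 1) * ω) with hadef
    have hane : a ≠ 0 := by
      rw [hadef, div_ne_zero_iff]
      exact ⟨by norm_num, mul_ne_zero (hcastm ▸ hmne) hωne⟩
    have hmpos : 0 < m := by omega
    have hset : {c : ℂ | c = 0 ∨ c ^ m = a} = insert 0 ((Polynomial.nthRoots m a).toFinset : Set ℂ) := by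
      ext c
      simp [Polynomial.mem_nthRoots hmpos, Multiset.mem_toFinset]
    rw [hset]
    have h0notmem : (0:ℂ) ∉ ((Polynomial.nthRoots m a).toFinset : Set ℂ) := by
      simp [Polynomial.mem_nthRoots hmpos, zero_pow (by omega : m ≠ 0), hane.symm]
    rw [Set.ncard_insert_of_notMem h0notmem ((Polynomial.nthRoots m a).toFinset.finite_toSet)]
    rw [Set.ncard_coe_finset]
    have hprim := Complex.isPrimitiveRoot_exp m (by omega : m ≠ 0)
    have hnodup := hprim.nthRoots_nodup hane
    rw [Multiset.toFinset_card_of_nodup hnodup, hprim.card_nthRoots]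
    have hex : ∃ α : ℂ, α ^ m = a := IsAlgClosed.exists_pow_nat_eq a hmpos
    rw [if_pos hex]
    omega
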